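/- Let A be a 2×2 real matrix such that A + Aᵀ is negative definite, and let p_1 ≥ 0. Then the associated semidefinite program (maximize ⟨A_2, M⟩ over M ⪰ 0 with ⟨A_1, M⟩ = −p_1) has an optimal solution M₀ with rank(M₀) ≤ 1. -/

import Mathlib

open Matrix

/-- Trace inner product on square matrices: ⟨X, Y⟩ = tr(XY). -/
noncomputable def ip {m : ℕ} (X Y : Matrix (Fin m) (Fin m) ℝ) : ℝ := (X * Y).trace

/-- For an m×m matrix `A`, the symmetric matrix `A_i = e_i a_iᵀ + a_i e_iᵀ`. -/
noncomputable def sdpMat {m : ℕ} (A : Matrix (Fin m) (Fin m) ℝ) (i : Fin m) :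
    Matrix (Fin m) (Fin m) ℝ :=
  Matrix.of fun k l => (if k = i then A i l else 0) + (if l = i then A i k else 0)

lemma sdp_psd_facts (M : Matrix (Fin 2) (Fin 2) ℝ) (hM : M.PosSemidef) :
    M 1 0 = M 0 1 ∧ 0 ≤ M 0 0 ∧ 0 ≤ M 1 1 ∧ (M 0 1)^2 ≤ M 0 0 * M 1 1 := by
  have hsym : M 1 0 = M 0 1 := by simpa using (hM.1.apply 1 0).symm
  have hq : ∀ v0 v1 : ℝ, 0 ≤ M 0 0 * v0^2 + 2*(M 0 1)*v0*v1 + M 1 1*v1^2 := by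
    intro v0 v1
    have h := hM.dotProduct_mulVec_nonneg ![v0, v1]
    simp [dotProduct, mulVec, Fin.sum_univ_two] at h
    rw [hsym] at h
    nlinarith [h]
  have hx : 0 ≤ M 0 0 := by have := hq 1 0; nlinarith [this]
  have hz : 0 ≤ M 1 1 := by have := hq 0 1; nlinarith [this]
  refine ⟨hsym, hx, hz, ?_⟩
  rcases hx.eq_or_lt with h0 | h0
  · have hy : M 0 1 = 0 := by
      by_contra hy
      have h := hq ((M 1 1 + 1)/(2*(M 0 1))) (-1)
      rw [← h0] at h
      field_simp at h
      have hpos : 0 < M 0 1 ^ 2 := lt_of_le_of_ne (sq_nonneg _) (Ne.symm (pow_ne_zero 2 hy))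
      rw [le_div_iff₀ hpos] at h
      nlinarith [h, sq_nonneg (M 0 1), hpos]
    rw [hy, ← h0]; nlinarith []
  · have h := hq (M 0 1) (-(M 0 0))
    nlinarith [h, h0]

lemma sdp_ip0 (A M : Matrix (Fin 2) (Fin 2) ℝ) :
    ip (sdpMat A 0) M = 2*A 0 0*M 0 0 + A 0 1*(M 0 1 + M 1 0) := by
  simp [ip, sdpMat, Matrix.trace_fin_two, Matrix.mul_apply, Fin.sum_univ_two]
  ring

lemma sdp_ip1 (A M : Matrix (Fin 2) (Fin 2) ℝ) :
    ip (sdpMat A 1) M = A 1 0*(M 0 1 + M 1 0) + 2*A 1 1*M 1 1 := by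
  simp [ip, sdpMat, Matrix.trace_fin_two, Matrix.mul_apply, Fin.sum_univ_two]
  ring

lemma sdp_rank1 (w : Fin 2 → ℝ) :
    (Matrix.of fun i j => w i * w j : Matrix (Fin 2) (Fin 2) ℝ).PosSemidef ∧
    (Matrix.of fun i j => w i * w j : Matrix (Fin 2) (Fin 2) ℝ).rank ≤ 1 := by
  constructor
  · refine Matrix.PosSemidef.of_dotProduct_mulVec_nonneg ?_ ?_
    · ext i j
      simp [Matrix.conjTranspose_apply, mul_comm]
    · intro v
      simp [dotProduct, mulVec, Fin.sum_univ_two]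
      nlinarith [sq_nonneg (w 0 * v 0 + w 1 * v 1)]
  · have heq : (Matrix.of fun i j => w i * w j : Matrix (Fin 2) (Fin 2) ℝ) =
        (Matrix.of fun (i : Fin 2) (_ : Fin 1) => w i) *
        (Matrix.of fun (_ : Fin 1) (j : Fin 2) => w j) := by
      ext i j
      simp [Matrix.mul_apply]
    rw [heq]
    calc ((Matrix.of fun (i : Fin 2) (_ : Fin 1) => w i) *
        (Matrix.of fun (_ : Fin 1) (j : Fin 2) => w j)).rank
        ≤ (Matrix.of fun (i : Fin 2) (_ : Fin 1) => w i).rank := Matrix.rank_mul_le_left _ _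
      _ ≤ Fintype.card (Fin 1) := Matrix.rank_le_card_width _
      _ = 1 := by simp

lemma sdp_zero_ineq (a b c d x y z : ℝ) (ha : a < 0) (hd : d < 0)
    (hdisc : (b+c)^2 < 4*(a*d))
    (hx : 0 ≤ x) (hz : 0 ≤ z) (hxz : y^2 ≤ x*z) (hfeas : 2*a*x + 2*b*y = 0) :
    2*c*y + 2*d*z ≤ 0 := by
  have hs : 0 ≤ -(a*x + d*z) := by
    nlinarith [mul_nonneg (neg_nonneg.2 ha.le) hx, mul_nonneg (neg_nonneg.2 hd.le) hz]
  have hq2 : ((b+c)*y)^2 ≤ (a*x + d*z)^2 := by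
    nlinarith [mul_le_mul_of_nonneg_left hxz (sq_nonneg (b+c)),
      mul_le_mul_of_nonneg_right (le_of_lt hdisc) (mul_nonneg hx hz),
      sq_nonneg (a*x - d*z)]
  have key : (b+c)*y ≤ -(a*x + d*z) := by nlinarith [hq2, hs]
  linarith

lemma sdp_feas_id (a b c d p t : ℝ) (ha : a < 0) (hE : 0 < a*d - b*c)
    (ht : 0 < t) (ht2 : t^2 = a*d*(a*d-b*c)) :
    2*a*(p*t/((-2*a)*((a*d-b*c)))) + 2*b*(p*c/(2*(t+(a*d-b*c)))) = -p := by
  have h1 : t + (a*d-b*c) ≠ 0 := by positivity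
  have h2 : a ≠ 0 := ha.ne
  have h3 : (a*d-b*c) ≠ 0 := hE.ne'
  field_simp
  ring_nf
  linear_combination (-p) * ht2

set_option maxHeartbeats 2000000 in
lemma sdp_main_ineq (a b c d p t x y z : ℝ) (ha : a < 0) (hd : d < 0)
    (hE : 0 < a*d - b*c) (ht : 0 < t) (ht2 : t^2 = a*d*(a*d-b*c)) (hp : 0 < p)
    (hx : 0 ≤ x) (hz : 0 ≤ z) (hxz : y^2 ≤ x*z) (hfeas : 2*a*x + 2*b*y = -p) :
    2*c*y + 2*d*z ≤ 2*c*(p*c/(2*(t+(a*d-b*c)))) +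
      2*d*((p*c/(2*(t+(a*d-b*c))))^2/(p*t/((-2*a)*(a*d-b*c)))) := by
  have h1 : t + (a*d-b*c) ≠ 0 := by positivity
  have h2 : a ≠ 0 := ha.ne
  have h3 : (a*d-b*c) ≠ 0 := hE.ne'
  have h4 : t ≠ 0 := ht.ne'
  have h5 : p ≠ 0 := hp.ne'
  set ys : ℝ := p*c/(2*(t+(a*d-b*c))) with hys
  set zs : ℝ := (p*c/(2*(t+(a*d-b*c))))^2/(p*t/((-2*a)*(a*d-b*c))) with hzs
  set V : ℝ := 2*c*ys + 2*d*zs with hV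
  have hzsf : zs = (-2*a)*(a*d-b*c)*c^2*p/(4*t*(t+(a*d-b*c))^2) := by
    rw [hzs]; field_simp; ring
  have hI2 : V*p = 4*(a*d-b*c)*ys^2 := by
    rw [hV, hys, hzsf]
    field_simp
    rw [div_left_inj' (pow_ne_zero 2 (show t + (a*d - c*b) ≠ 0 by rwa [mul_comm c b]))]
    linear_combination (16*c^2) * ht2
  have hI1 : 2*b*V - 2*c*p = -(8*(a*d-b*c)*ys) := by
    rw [hV, hys, hzsf]
    field_simp
    ring_nf
    linear_combination (16*c*(b*c - t)) * ht2
  have hQ : 0 ≤ V*(p + 2*b*y) - 2*c*y*(p + 2*b*y) + 4*(a*d)*y^2 := by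
    have hQeq : V*(p + 2*b*y) - 2*c*y*(p + 2*b*y) + 4*(a*d)*y^2
        = 4*(a*d-b*c)*(y - ys)^2 := by linear_combination y*hI1 + hI2
    rw [hQeq]
    positivity
  have hu : p + 2*b*y = -(2*a*x) := by linarith
  have hW : 0 ≤ V*x - 2*c*x*y - 2*d*y^2 := by
    have h6 : -(2*a)*(V*x - 2*c*x*y - 2*d*y^2)
        = V*(p + 2*b*y) - 2*c*y*(p + 2*b*y) + 4*(a*d)*y^2 := by rw [hu]; ring
    nlinarith [hQ, h6]
  have hxpos : 0 < x := by
    rcases hx.eq_or_lt with h | h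
    · exfalso
      have hy0 : y = 0 := by nlinarith [hxz, sq_nonneg y]
      rw [hy0, ← h] at hfeas
      simp at hfeas
      linarith
    · exact h
  nlinarith [hW, mul_le_mul_of_nonneg_left hxz (neg_nonneg.2 (by linarith : 2*d ≤ 0)), hxpos]

set_option maxHeartbeats 2000000 in
/-- For a 2×2 matrix `A` with `A + Aᵀ` negative definite, the associated semidefinite
program (maximize `⟨A₂, M⟩` over `M ⪰ 0` with `⟨A₁, M⟩ = -p₁`) has an optimal solution of
rank at most 1. -/
theorem sdp_two_by_two_rank_one_optimal (A : Matrix (Fin 2) (Fin 2) ℝ)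
    (hA : (-(A + Aᵀ)).PosDef) (p₁ : ℝ) (hp₁ : 0 ≤ p₁) :
    ∃ M₀ : Matrix (Fin 2) (Fin 2) ℝ, M₀.PosSemidef ∧ ip (sdpMat A 0) M₀ = -p₁ ∧
      M₀.rank ≤ 1 ∧
      ∀ M : Matrix (Fin 2) (Fin 2) ℝ, M.PosSemidef → ip (sdpMat A 0) M = -p₁ →
        ip (sdpMat A 1) M ≤ ip (sdpMat A 1) M₀ := by
  -- extract scalar facts from negative definiteness
  have h1 := hA.dotProduct_mulVec_pos (x := ![1, 0]) (by intro h; simpa using congrFun h 0)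
  have h2 := hA.dotProduct_mulVec_pos (x := ![0, 1]) (by intro h; simpa using congrFun h 1)
  simp [dotProduct, mulVec, Fin.sum_univ_two] at h1 h2
  have hdetA := hA.det_pos
  rw [Matrix.det_fin_two] at hdetA
  simp at hdetA
  have ha : A 0 0 < 0 := by linarith
  have hd : A 1 1 < 0 := by linarith
  have hdisc : (A 0 1 + A 1 0)^2 < 4*(A 0 0 * A 1 1) := by nlinarith [hdetA]
  rcases hp₁.eq_or_lt with h0 | hp
  · -- p₁ = 0 : take M₀ = 0
    refine ⟨0, Matrix.PosSemidef.zero, ?_, ?_, ?_⟩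
    · rw [sdp_ip0]; simp [← h0]
    · simp [Matrix.rank_zero]
    · intro M hM hfeas
      obtain ⟨hsym, hx, hz, hxz⟩ := sdp_psd_facts M hM
      rw [sdp_ip0, hsym] at hfeas
      rw [sdp_ip1, sdp_ip1, hsym]
      simp only [Matrix.zero_apply]
      have := sdp_zero_ineq (A 0 0) (A 0 1) (A 1 0) (A 1 1) (M 0 0) (M 0 1) (M 1 1)
        ha hd hdisc hx hz hxz (by rw [← h0] at hfeas; linarith)
      linarith
  · -- p₁ > 0
    have hE : 0 < A 0 0*A 1 1 - A 0 1*A 1 0 := by nlinarith [sq_nonneg (A 0 1 - A 1 0)]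
    have had : 0 < A 0 0*A 1 1 := by nlinarith [sq_nonneg (A 0 1 + A 1 0)]
    set E : ℝ := A 0 0*A 1 1 - A 0 1*A 1 0 with hEdef
    set t : ℝ := Real.sqrt (A 0 0*A 1 1*E) with htdef
    have ht2 : t^2 = A 0 0*A 1 1*E := Real.sq_sqrt (by positivity)
    have ht : 0 < t := Real.sqrt_pos.2 (by positivity)
    set ys : ℝ := p₁*A 1 0/(2*(t+E)) with hysdef
    set xs : ℝ := p₁*t/((-2*A 0 0)*E) with hxsdef
    have hxs : 0 < xs := by
      rw [hxsdef]
      apply div_pos (by positivity)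
      exact mul_pos (by linarith) hE
    set w : Fin 2 → ℝ := ![Real.sqrt xs, ys/Real.sqrt xs] with hwdef
    have hsn : Real.sqrt xs ≠ 0 := by positivity
    have e00 : w 0 * w 0 = xs := by
      simp [hwdef]; exact Real.mul_self_sqrt hxs.le
    have e01 : w 0 * w 1 = ys := by
      simp [hwdef]; rw [mul_comm, div_mul_cancel₀ _ hsn]
    have e11 : w 1 * w 1 = ys^2/xs := by
      simp [hwdef]; rw [div_mul_div_comm, Real.mul_self_sqrt hxs.le, ← sq]
    obtain ⟨hpsd, hrank⟩ := sdp_rank1 w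
    refine ⟨Matrix.of fun i j => w i * w j, hpsd, ?_, hrank, ?_⟩
    · rw [sdp_ip0]
      simp only [Matrix.of_apply]
      rw [e00, e01, mul_comm (w 1) (w 0), e01]
      have := sdp_feas_id (A 0 0) (A 0 1) (A 1 0) (A 1 1) p₁ t ha hE ht ht2
      rw [hxsdef, hysdef]
      linarith [this]
    · intro M hM hfeas
      obtain ⟨hsym, hx, hz, hxz⟩ := sdp_psd_facts M hM
      rw [sdp_ip0, hsym] at hfeas
      rw [sdp_ip1, sdp_ip1]
      simp only [Matrix.of_apply]
      rw [e01, mul_comm (w 1) (w 0), e01, e11, hsym]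
      have := sdp_main_ineq (A 0 0) (A 0 1) (A 1 0) (A 1 1) p₁ t (M 0 0) (M 0 1) (M 1 1)
        ha hd hE ht ht2 hp hx hz hxz (by linarith)
      rw [hysdef, hxsdef] at *
      linarith [this]
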